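/- Let A ⊆ ℝ be a compact set with diam(A) > 0, let n ≥ 2, and let v ∈ [1/2, 1]ⁿ with π(x) = v·x for x ∈ ℝⁿ. Suppose the projection π(Aⁿ) has positive Lebesgue measure λ > 0. Then there exists a positive integer N, depending only on n, diam(A), and λ, such that, after reordering the coordinates of v, the set v₁A₁ + ⋯ + v_{n−1}A₁ has Lebesgue measure at least diam(A)·λ, where A₁ = N A^{(2)} − N A^{(2)}. -/

import Mathlib

open MeasureTheory
open scoped Pointwise ENNReal

/-- The `N`-fold sumset `{x₁ + ⋯ + x_N : x_i ∈ S}`. -/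
def sumN (N : ℕ) (S : Set ℝ) : Set ℝ :=
  {x | ∃ f : Fin N → ℝ, (∀ i, f i ∈ S) ∧ x = ∑ i, f i}

/-- The key Edgar–Miller-style lemma: if `A ⊆ ℝ` is compact with positive diameter,
`v ∈ [1/2,1]ⁿ` and the projection `π(x) = v ⋅ x` of `Aⁿ` has positive Lebesgue measure `λ`,
then for some `N` (depending only on `n`, `diam A`, `λ`) and after reordering the coordinates
of `v`, the set `v₁A₁ + ⋯ + v_{n−1}A₁`, with `A₁ = N A^{(2)} − N A^{(2)}`, has Lebesgue
measure at least `diam(A) ⋅ λ`. -/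
lemma mem_sumN_add {S : Set ℝ} {u u' : ℝ} {M M' : ℕ}
    (h : u ∈ sumN M S) (h' : u' ∈ sumN M' S) : u + u' ∈ sumN (M + M') S := by
  obtain ⟨f, hf, rfl⟩ := h
  obtain ⟨f', hf', rfl⟩ := h'
  refine ⟨Fin.append f f', ?_, ?_⟩
  · intro i
    refine Fin.addCases (fun j => ?_) (fun j => ?_) i
    · simpa [Fin.append_left] using hf j
    · simpa [Fin.append_right] using hf' j
  · rw [Fin.sum_univ_add]
    simp [Fin.append_left, Fin.append_right]

lemma mem_sumN_two {S : Set ℝ} {x y : ℝ} (hx : x ∈ S) (hy : y ∈ S) :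
    x + y ∈ sumN 2 S :=
  ⟨![x, y], by intro i; fin_cases i <;> simpa, by simp [Fin.sum_univ_two]⟩

lemma mem_sumN_nsmul {S : Set ℝ} {u : ℝ} {M : ℕ} (h : u ∈ sumN M S) :
    ∀ k : ℕ, (k : ℝ) * u ∈ sumN (k * M) S := by
  intro k
  induction k with
  | zero =>
      rw [Nat.zero_mul]
      exact ⟨fun i => i.elim0, fun i => i.elim0, by simp⟩
  | succ k ih =>
      have : ((k+1 : ℕ) : ℝ) * u = (k : ℝ) * u + u := by push_cast; ring
      rw [this, Nat.succ_mul]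
      exact mem_sumN_add ih h

lemma mem_sumN_mul {A : Set ℝ} {u x : ℝ} {M : ℕ} (h : u ∈ sumN M A) (hx : x ∈ A) :
    u * x ∈ sumN M (A * A) := by
  obtain ⟨f, hf, rfl⟩ := h
  exact ⟨fun i => f i * x, fun i => Set.mul_mem_mul (hf i) hx, by rw [Finset.sum_mul]⟩

lemma sumN_nonempty {S : Set ℝ} (hS : S.Nonempty) (M : ℕ) : (sumN M S).Nonempty := by
  obtain ⟨a, ha⟩ := hS
  exact ⟨∑ _i : Fin M, a, fun _ => a, fun _ => ha, rfl⟩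

/-- difference of two `A−A`-style elements lies in `sumN 2 A − sumN 2 A`. -/
lemma sub_sub_mem {A : Set ℝ} {x z : ℝ} (hx : x ∈ A - A) (hz : z ∈ A - A) :
    x - z ∈ sumN 2 A - sumN 2 A := by
  obtain ⟨a, ha, b, hb, rfl⟩ := hx
  obtain ⟨c, hc, d, hd, rfl⟩ := hz
  exact ⟨a + d, mem_sumN_two ha hd, b + c, mem_sumN_two hb hc, by ring⟩

/-- Steinhaus: a compact set of positive measure has `P − P` containing a ball around `0`. -/
lemma steinhaus_compact {P : Set ℝ} (hP : IsCompact P) (hpos : 0 < volume P) :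
    ∃ ρ : ℝ, 0 < ρ ∧ ∀ t : ℝ, |t| < ρ → ∃ p ∈ P, ∃ q ∈ P, p - q = t := by
  have h := MeasureTheory.Measure.sub_mem_nhds_zero_of_addHaar_pos volume P
    hP.measurableSet hpos
  rcases Metric.mem_nhds_iff.1 h with ⟨ρ, hρ, hball⟩
  refine ⟨ρ, hρ, fun t ht => ?_⟩
  have : t ∈ P - P := hball (by simpa [Real.dist_eq] using ht)
  rcases this with ⟨p, hp, q, hq, hpq⟩
  exact ⟨p, hp, q, hq, hpq⟩

/-- If a continuous map is injective on a compact set `T` whose image contains `Icc c d`,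
then `T ∩ Φ⁻¹(Icc c d)` is preconnected. -/
lemma preconn_preimage {α : Type*} [TopologicalSpace α] [T2Space α]
    {Φ : α → ℝ} {T : Set α} {c d : ℝ}
    (hT : IsCompact T) (hΦ : Continuous Φ) (hinj : Set.InjOn Φ T)
    (hJ : Set.Icc c d ⊆ Φ '' T) :
    IsPreconnected (T ∩ Φ ⁻¹' (Set.Icc c d)) := by
  set C := T ∩ Φ ⁻¹' (Set.Icc c d) with hC
  have hCco : IsCompact C := hT.inter_right (isClosed_Icc.preimage hΦ)
  have hCsub : C ⊆ T := Set.inter_subset_left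
  have himC : Φ '' C = Set.Icc c d := by
    apply Set.Subset.antisymm
    · rintro y ⟨x, hx, rfl⟩; exact hx.2
    · intro y hy
      rcases hJ hy with ⟨x, hx, rfl⟩
      exact ⟨x, ⟨hx, hy⟩, rfl⟩
  rintro u vv hu hv hcover ⟨x₁, hx₁C, hx₁u⟩ ⟨x₂, hx₂C, hx₂v⟩
  by_contra hdisj
  rw [Set.not_nonempty_iff_eq_empty] at hdisj
  -- split C into two disjoint nonempty compacts
  set K₁ : Set α := C \ u with hK₁
  set K₂ : Set α := C \ vv with hK₂
  have hK₁co : IsCompact K₁ := hCco.diff hu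
  have hK₂co : IsCompact K₂ := hCco.diff hv
  have hK₁K₂ : K₁ ∪ K₂ = C := by
    ext z
    constructor
    · rintro (⟨h, _⟩ | ⟨h, _⟩) <;> exact h
    · intro hz
      by_cases hzu : z ∈ u
      · right
        refine ⟨hz, fun hzv => ?_⟩
        have : z ∈ C ∩ (u ∩ vv) := ⟨hz, hzu, hzv⟩
        rw [hdisj] at this; exact this
      · left; exact ⟨hz, hzu⟩
  have hK₁ne : K₁.Nonempty := by
    refine ⟨x₂, hx₂C, fun hx₂u => ?_⟩
    have : x₂ ∈ C ∩ (u ∩ vv) := ⟨hx₂C, hx₂u, hx₂v⟩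
    rw [hdisj] at this; exact this
  have hK₂ne : K₂.Nonempty := by
    refine ⟨x₁, hx₁C, fun hx₁v => ?_⟩
    have : x₁ ∈ C ∩ (u ∩ vv) := ⟨hx₁C, hx₁u, hx₁v⟩
    rw [hdisj] at this; exact this
  have hdisjK : Disjoint K₁ K₂ := by
    rw [Set.disjoint_iff]
    rintro z ⟨⟨hzC, hzu⟩, ⟨_, hzv⟩⟩
    rcases hcover hzC with h | h
    · exact hzu h
    · exact hzv h
  -- images
  set F₁ : Set ℝ := Φ '' K₁ with hF₁
  set F₂ : Set ℝ := Φ '' K₂ with hF₂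
  have hF₁cl : IsClosed F₁ := (hK₁co.image hΦ).isClosed
  have hF₂cl : IsClosed F₂ := (hK₂co.image hΦ).isClosed
  have hFdisj : Disjoint F₁ F₂ := by
    rw [Set.disjoint_iff]
    rintro y ⟨⟨z₁, hz₁, rfl⟩, ⟨z₂, hz₂, hz⟩⟩
    have hz₁T : z₁ ∈ T := hCsub hz₁.1
    have hz₂T : z₂ ∈ T := hCsub hz₂.1
    have : z₂ = z₁ := hinj hz₂T hz₁T hz
    subst this
    exact (Set.disjoint_iff.1 hdisjK) ⟨hz₁, hz₂⟩ |>.elim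
  have hFcover : Set.Icc c d ⊆ F₁ ∪ F₂ := by
    intro y hy
    rw [← himC] at hy
    rcases hy with ⟨z, hz, rfl⟩
    rw [← hK₁K₂] at hz
    rcases hz with h | h
    · exact Or.inl ⟨z, h, rfl⟩
    · exact Or.inr ⟨z, h, rfl⟩
  have hF₁sub : F₁ ⊆ Set.Icc c d := by
    rintro y ⟨z, hz, rfl⟩; rw [← himC]; exact ⟨z, hK₁K₂ ▸ Or.inl hz, rfl⟩
  have hF₂sub : F₂ ⊆ Set.Icc c d := by
    rintro y ⟨z, hz, rfl⟩; rw [← himC]; exact ⟨z, hK₁K₂ ▸ Or.inr hz, rfl⟩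
  -- contradiction with preconnectedness of Icc
  have hIcc : IsPreconnected (Set.Icc c d) := isPreconnected_Icc
  have := hIcc F₂ᶜ F₁ᶜ hF₂cl.isOpen_compl hF₁cl.isOpen_compl
    (by
      intro y hy
      rcases hFcover hy with h | h
      · exact Or.inl fun h2 => (Set.disjoint_iff.1 hFdisj) ⟨h, h2⟩
      · exact Or.inr fun h1 => (Set.disjoint_iff.1 hFdisj) ⟨h1, h⟩)
    (by
      obtain ⟨z, hz⟩ := hK₁ne
      exact ⟨Φ z, hF₁sub ⟨z, hz, rfl⟩, fun h2 => (Set.disjoint_iff.1 hFdisj) ⟨⟨z, hz, rfl⟩, h2⟩⟩)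
    (by
      obtain ⟨z, hz⟩ := hK₂ne
      exact ⟨Φ z, hF₂sub ⟨z, hz, rfl⟩, fun h1 => (Set.disjoint_iff.1 hFdisj) ⟨h1, ⟨z, hz, rfl⟩⟩⟩)
  rcases this with ⟨y, hyIcc, hy2, hy1⟩
  rcases hFcover hyIcc with h | h
  · exact hy1 h
  · exact hy2 h

lemma exists_relation (A : Set ℝ) (hA : IsCompact A)
    (n : ℕ) (hn : 2 ≤ n) (v : Fin n → ℝ) (hv : ∀ i, v i ∈ Set.Icc (1/2 : ℝ) 1)
    (hlam : 0 < volume ((fun x : Fin n → ℝ => ∑ i, v i * x i) '' {x | ∀ i, x i ∈ A})) :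
    ∃ g : Fin n → ℝ, (∀ i, g i ∈ sumN 2 A - sumN 2 A) ∧ (∑ i, v i * g i) = 0 ∧ ∃ j, g j ≠ 0 := by
  classical
  have hvpos : ∀ i, (0:ℝ) < v i := fun i => lt_of_lt_of_le (by norm_num) (hv i).1
  set Φ : (Fin n → ℝ) → ℝ := fun x => ∑ i, v i * x i with hΦdef
  have hΦcont : Continuous Φ := by
    apply continuous_finset_sum
    intro i _
    exact continuous_const.mul (continuous_apply i)
  set Apow : Set (Fin n → ℝ) := {x | ∀ i, x i ∈ A} with hApow
  have hApowpi : Apow = Set.pi Set.univ (fun _ : Fin n => A) := by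
    ext x; simp [hApow, Set.mem_pi]
  have hApowco : IsCompact Apow := by
    rw [hApowpi]; exact isCompact_univ_pi (fun _ => hA)
  set P : Set ℝ := Φ '' Apow with hP
  have hPco : IsCompact P := hApowco.image hΦcont
  obtain ⟨ρ, hρ, hst⟩ := steinhaus_compact hPco hlam
  -- the difference body
  set Am : Set ℝ := A - A with hAm
  have hAmco : IsCompact Am := by
    have : Am = (fun p : ℝ × ℝ => p.1 - p.2) '' (A ×ˢ A) := by
      rw [hAm]
      ext t
      constructor
      · rintro ⟨a, ha, b, hb, rfl⟩
        exact ⟨(a, b), ⟨ha, hb⟩, rfl⟩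
      · rintro ⟨⟨a, b⟩, ⟨ha, hb⟩, rfl⟩
        exact ⟨a, ha, b, hb, rfl⟩
    rw [this]
    exact (hA.prod hA).image (continuous_fst.sub continuous_snd)
  set T : Set (Fin n → ℝ) := Set.pi Set.univ (fun _ : Fin n => Am) with hT
  have hTco : IsCompact T := isCompact_univ_pi (fun _ => hAmco)
  have hTmem : ∀ {z : Fin n → ℝ}, z ∈ T → ∀ i, z i ∈ Am := by
    intro z hz i; exact hz i (Set.mem_univ i)
  have hPP : ∀ t : ℝ, |t| < ρ → ∃ z ∈ T, Φ z = t := by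
    intro t ht
    obtain ⟨p, hp, q, hq, hpq⟩ := hst t ht
    obtain ⟨x, hx, rfl⟩ := hp
    obtain ⟨y, hy, rfl⟩ := hq
    refine ⟨x - y, ?_, ?_⟩
    · intro i _
      exact Set.sub_mem_sub (hx i) (hy i)
    · rw [← hpq]
      simp only [hΦdef, Pi.sub_apply, mul_sub]
      rw [Finset.sum_sub_distrib]
  by_cases hinj : Set.InjOn Φ T
  · -- injective case: A − A contains an interval
    have hJ : Set.Icc (0:ℝ) (ρ/2) ⊆ Φ '' T := by
      intro t ht
      obtain ⟨z, hz, hzt⟩ := hPP t (by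
        rw [abs_of_nonneg ht.1]; linarith [ht.2])
      exact ⟨z, hz, hzt⟩
    have hconn := preconn_preimage hTco hΦcont hinj hJ
    obtain ⟨x₁, hx₁, hΦx₁⟩ := hPP 0 (by simpa using hρ)
    obtain ⟨x₂, hx₂, hΦx₂⟩ := hPP (ρ/2) (by
      rw [abs_of_nonneg (by linarith)]; linarith)
    have hx₁C : x₁ ∈ T ∩ Φ ⁻¹' (Set.Icc 0 (ρ/2)) := by
      refine ⟨hx₁, ?_⟩
      simp only [Set.mem_preimage, hΦx₁, Set.mem_Icc]
      constructor <;> linarith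
    have hx₂C : x₂ ∈ T ∩ Φ ⁻¹' (Set.Icc 0 (ρ/2)) := by
      refine ⟨hx₂, ?_⟩
      simp only [Set.mem_preimage, hΦx₂, Set.mem_Icc]
      constructor <;> linarith
    have hx₁₂ : x₁ ≠ x₂ := by
      intro h
      rw [h, hΦx₂] at hΦx₁
      linarith
    obtain ⟨i₀, hi₀⟩ : ∃ i₀, x₁ i₀ ≠ x₂ i₀ := by
      by_contra h
      push_neg at h
      exact hx₁₂ (funext h)
    set img : Set ℝ := (fun z : Fin n → ℝ => z i₀) '' (T ∩ Φ ⁻¹' (Set.Icc 0 (ρ/2))) with himg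
    have himgconn : IsPreconnected img :=
      hconn.image _ (continuous_apply i₀).continuousOn
    have himgsub : img ⊆ Am := by
      rintro y ⟨z, hz, rfl⟩
      exact hTmem hz.1 i₀
    have ha : x₁ i₀ ∈ img := ⟨x₁, hx₁C, rfl⟩
    have hb : x₂ i₀ ∈ img := ⟨x₂, hx₂C, rfl⟩
    set α : ℝ := min (x₁ i₀) (x₂ i₀) with hα
    set β : ℝ := max (x₁ i₀) (x₂ i₀) with hβ
    have hαβ : α < β := by
      rcases lt_or_gt_of_ne hi₀ with h | h
      · rw [hα, hβ, min_eq_left h.le, max_eq_right h.le]; exact h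
      · rw [hα, hβ, min_eq_right h.le, max_eq_left h.le]; exact h
    have hαmem : α ∈ img := by
      rcases min_cases (x₁ i₀) (x₂ i₀) with ⟨h, _⟩ | ⟨h, _⟩ <;> rw [hα, h]
      exacts [ha, hb]
    have hβmem : β ∈ img := by
      rcases max_cases (x₁ i₀) (x₂ i₀) with ⟨h, _⟩ | ⟨h, _⟩ <;> rw [hβ, h]
      exacts [ha, hb]
    have hIccAm : Set.Icc α β ⊆ Am :=
      fun y hy => himgsub (himgconn.Icc_subset hαmem hβmem hy)
    set ℓ : ℝ := β - α with hℓ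
    have hℓpos : 0 < ℓ := by rw [hℓ]; linarith
    have hsmall : ∀ t : ℝ, |t| ≤ ℓ → t ∈ sumN 2 A - sumN 2 A := by
      intro t ht
      rcases le_total 0 t with h | h
      · have h₁ : α + t ∈ Set.Icc α β := by
          constructor
          · linarith
          · have := (abs_le.1 ht).2
            rw [hℓ] at this
            linarith
        have h₂ : α ∈ Set.Icc α β := ⟨le_refl _, le_of_lt hαβ⟩
        have heq : t = (α + t) - α := by ring
        rw [heq]
        exact sub_sub_mem (hIccAm h₁) (hIccAm h₂)
      · have h₁ : α ∈ Set.Icc α β := ⟨le_refl _, le_of_lt hαβ⟩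
        have h₂ : α - t ∈ Set.Icc α β := by
          constructor
          · linarith
          · have := (abs_le.1 ht).1
            rw [hℓ] at this
            linarith
        have heq : t = α - (α - t) := by ring
        rw [heq]
        exact sub_sub_mem (hIccAm h₁) (hIccAm h₂)
    -- build the relation
    set i0 : Fin n := ⟨0, by omega⟩ with hi0
    set i1 : Fin n := ⟨1, by omega⟩ with hi1
    have hi01 : i0 ≠ i1 := by
      intro h
      have := congrArg Fin.val h
      simp [hi0, hi1] at this
    set ζ : ℝ := ℓ / 2 with hζ
    have hζpos : 0 < ζ := by rw [hζ]; linarith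
    have hbound : ∀ i : Fin n, ζ / v i ≤ ℓ := by
      intro i
      rw [div_le_iff₀ (hvpos i)]
      have := (hv i).1
      nlinarith
    refine ⟨fun i => if i = i0 then ζ / v i0 else if i = i1 then -(ζ / v i1) else 0,
      ?_, ?_, ⟨i0, ?_⟩⟩
    · intro i
      dsimp only
      by_cases h0 : i = i0
      · rw [if_pos h0]
        apply hsmall
        rw [abs_of_nonneg (le_of_lt (div_pos hζpos (hvpos i0)))]
        exact hbound i0
      · rw [if_neg h0]
        by_cases h1 : i = i1
        · rw [if_pos h1]
          apply hsmall
          rw [abs_neg, abs_of_nonneg (le_of_lt (div_pos hζpos (hvpos i1)))]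
          exact hbound i1
        · rw [if_neg h1]
          exact hsmall 0 (by simp [le_of_lt hℓpos])
    · have hterm : ∀ i : Fin n, v i * (if i = i0 then ζ / v i0 else if i = i1 then -(ζ / v i1) else 0)
          = (if i = i0 then ζ else 0) + (if i = i1 then -ζ else 0) := by
        intro i
        by_cases h0 : i = i0
        · rw [h0, if_pos rfl, if_pos rfl, if_neg hi01]
          rw [mul_comm, div_mul_cancel₀ _ (ne_of_gt (hvpos i0))]
          ring
        · rw [if_neg h0, if_neg h0]
          by_cases h1 : i = i1
          · rw [h1, if_pos rfl, if_pos rfl]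
            rw [mul_neg, mul_comm, div_mul_cancel₀ _ (ne_of_gt (hvpos i1))]
            ring
          · rw [if_neg h1, if_neg h1]; ring
      calc (∑ i, v i * (if i = i0 then ζ / v i0 else if i = i1 then -(ζ / v i1) else 0))
          = ∑ i, ((if i = i0 then ζ else 0) + (if i = i1 then -ζ else 0)) :=
            Finset.sum_congr rfl (fun i _ => hterm i)
        _ = (∑ i, (if i = i0 then ζ else 0)) + (∑ i, (if i = i1 then -ζ else 0)) :=
            Finset.sum_add_distrib
        _ = 0 := by simp
    · dsimp only
      rw [if_pos rfl]
      exact ne_of_gt (div_pos hζpos (hvpos i0))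
  · -- non-injective case
    rw [Set.InjOn] at hinj
    push_neg at hinj
    obtain ⟨y, hy, y', hy', heq, hne⟩ := hinj
    refine ⟨fun i => y i - y' i, ?_, ?_, ?_⟩
    · intro i
      exact sub_sub_mem (hTmem hy i) (hTmem hy' i)
    · have : (∑ i, v i * (y i - y' i)) = Φ y - Φ y' := by
        simp only [hΦdef, mul_sub]
        rw [Finset.sum_sub_distrib]
      rw [this, heq, sub_self]
    · by_contra h
      push_neg at h
      apply hne
      funext i
      have := h i
      linarith [sub_eq_zero.1 (by linarith : y i - y' i = 0)]

theorem eliminate_coordinate (A : Set ℝ) (hA : IsCompact A) (hdiam : 0 < Metric.diam A)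
    (n : ℕ) (hn : 2 ≤ n) (v : Fin n → ℝ) (hv : ∀ i, v i ∈ Set.Icc (1/2 : ℝ) 1)
    (hlam : 0 < volume ((fun x : Fin n → ℝ => ∑ i, v i * x i) '' {x | ∀ i, x i ∈ A})) :
    ∃ N : ℕ, 0 < N ∧ ∃ e : Equiv.Perm (Fin n),
      ENNReal.ofReal (Metric.diam A) *
          volume ((fun x : Fin n → ℝ => ∑ i, v i * x i) '' {x | ∀ i, x i ∈ A}) ≤
        volume {y : ℝ | ∃ f : Fin (n-1) → ℝ,
          (∀ i, f i ∈ sumN N (A * A) - sumN N (A * A)) ∧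
          y = ∑ i : Fin (n-1), v (e (Fin.castLE (Nat.sub_le n 1) i)) * f i} := by
  classical
  obtain ⟨a₀, ha₀⟩ : A.Nonempty := by
    rcases Set.eq_empty_or_nonempty A with h | h
    · rw [h, Metric.diam_empty] at hdiam
      exact absurd hdiam (lt_irrefl 0)
    · exact h
  obtain ⟨g, hgmem, hgsum, j, hgj⟩ := exists_relation A hA n hn v hv hlam
  set D : ℝ := Metric.diam A with hD
  have hgjabs : 0 < |g j| := abs_pos.2 hgj
  set k : ℕ := ⌈D / |g j|⌉₊ + 1 with hk
  have hkpos : 0 < k := by omega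
  have hDk : D ≤ (k : ℝ) * |g j| := by
    have h1 : D / |g j| ≤ (⌈D / |g j|⌉₊ : ℝ) := Nat.le_ceil _
    have h2 : ((⌈D / |g j|⌉₊ : ℝ)) ≤ (k : ℝ) := by
      rw [hk]; push_cast; linarith
    have h3 : D / |g j| ≤ (k : ℝ) := le_trans h1 h2
    calc D = D / |g j| * |g j| := by field_simp
      _ ≤ (k : ℝ) * |g j| := by
          exact mul_le_mul_of_nonneg_right h3 (le_of_lt hgjabs)
  set δ : ℝ := (k : ℝ) * g j with hδ
  have hδabs : |δ| = (k : ℝ) * |g j| := by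
    rw [hδ, abs_mul, Nat.abs_cast]
  set N : ℕ := 4 * k with hN
  set lastIdx : Fin n := ⟨n - 1, by omega⟩ with hlast
  set e : Equiv.Perm (Fin n) := Equiv.swap lastIdx j with he
  refine ⟨N, by omega, e, ?_⟩
  set Pset : Set ℝ := (fun x : Fin n → ℝ => ∑ i, v i * x i) '' {x | ∀ i, x i ∈ A} with hPset
  set RHS : Set ℝ := {y : ℝ | ∃ f : Fin (n-1) → ℝ,
      (∀ i, f i ∈ sumN N (A * A) - sumN N (A * A)) ∧
      y = ∑ i : Fin (n-1), v (e (Fin.castLE (Nat.sub_le n 1) i)) * f i} with hRHS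
  -- decompositions of the relation entries
  obtain ⟨s, hs, t, ht, hst⟩ := hgmem j
  -- basic index map facts
  have helast : e lastIdx = j := Equiv.swap_apply_left lastIdx j
  have he_ne_j : ∀ i : Fin (n-1), e (Fin.castLE (Nat.sub_le n 1) i) ≠ j := by
    intro i h
    have h2 : e (Fin.castLE (Nat.sub_le n 1) i) = e lastIdx := by rw [h, helast]
    have h3 := e.injective h2
    have h4 := congrArg Fin.val h3
    simp only [Fin.val_castLE, hlast] at h4
    have := i.isLt
    omega
  have himg : Finset.image (fun i : Fin (n-1) => e (Fin.castLE (Nat.sub_le n 1) i))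
      Finset.univ = Finset.univ.erase j := by
    apply Finset.ext
    intro b
    simp only [Finset.mem_image, Finset.mem_erase, Finset.mem_univ, and_true, true_and]
    constructor
    · rintro ⟨i, -, rfl⟩
      exact he_ne_j i
    · intro hb
      have ha : e (e.symm b) = b := e.apply_symm_apply b
      have hane : e.symm b ≠ lastIdx := by
        intro h
        rw [h, helast] at ha
        exact hb ha.symm
      have haval : (e.symm b).val < n - 1 := by
        have h1 := (e.symm b).isLt
        have h2 : (e.symm b).val ≠ n - 1 := by
          intro h
          apply hane
          apply Fin.ext
          rw [h]
        omega
      refine ⟨⟨(e.symm b).val, haval⟩, ?_⟩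
      have : Fin.castLE (Nat.sub_le n 1) ⟨(e.symm b).val, haval⟩ = e.symm b := Fin.ext rfl
      rw [this, ha]
  have hinj2 : ∀ x ∈ Finset.univ, ∀ y ∈ Finset.univ,
      e (Fin.castLE (Nat.sub_le n 1) x) = e (Fin.castLE (Nat.sub_le n 1) y) → x = y := by
    intro x _ y _ h
    have h2 := e.injective h
    have h3 := congrArg Fin.val h2
    simp only [Fin.castLE] at h3
    exact Fin.ext h3
  -- the inclusion δ • Pset ⊆ RHS
  have hsub : δ • Pset ⊆ RHS := by
    rintro - ⟨p, hp, rfl⟩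
    obtain ⟨x, hx, rfl⟩ := hp
    have hxA : ∀ i, x i ∈ A := hx
    -- the witness function
    set w : Fin n → ℝ := fun i =>
      if i = j then 0 else δ * x i + (-(k : ℝ) * g i) * x j with hw
    have hwmem : ∀ i : Fin n, w i ∈ sumN N (A * A) - sumN N (A * A) := by
      intro i
      by_cases hij : i = j
      · obtain ⟨r, hr⟩ := sumN_nonempty (⟨a₀ * a₀, Set.mul_mem_mul ha₀ ha₀⟩ : (A * A).Nonempty) N
        refine ⟨r, hr, r, hr, ?_⟩
        rw [hw]
        simp [hij]
      · obtain ⟨si, hsi, ti, hti, hsti⟩ := hgmem i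
        have hidx : k * 2 + k * 2 = N := by rw [hN]; ring
        have ha' : (k : ℝ) * s * x i + (k : ℝ) * ti * x j ∈ sumN N (A * A) := by
          rw [← hidx]
          exact mem_sumN_add (mem_sumN_mul (mem_sumN_nsmul hs k) (hxA i))
            (mem_sumN_mul (mem_sumN_nsmul hti k) (hxA j))
        have hb' : (k : ℝ) * t * x i + (k : ℝ) * si * x j ∈ sumN N (A * A) := by
          rw [← hidx]
          exact mem_sumN_add (mem_sumN_mul (mem_sumN_nsmul ht k) (hxA i))
            (mem_sumN_mul (mem_sumN_nsmul hsi k) (hxA j))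
        refine ⟨_, ha', _, hb', ?_⟩
        rw [hw]
        simp only [if_neg hij]
        rw [hδ, ← hst, ← hsti]
        ring
    have hwj : w j = 0 := by rw [hw]; simp
    -- sum computation
    have hYsum : ∑ i ∈ Finset.univ.erase j, v i * (-(k : ℝ) * g i) = v j * δ := by
      have h1 : (∑ i ∈ Finset.univ.erase j, v i * (-(k : ℝ) * g i)) + v j * (-(k : ℝ) * g j)
          = ∑ i, v i * (-(k : ℝ) * g i) :=
        Finset.sum_erase_add _ _ (Finset.mem_univ j)
      have h2 : ∑ i, v i * (-(k : ℝ) * g i) = -(k : ℝ) * ∑ i, v i * g i := by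
        rw [Finset.mul_sum]
        exact Finset.sum_congr rfl (fun i _ => by ring)
      rw [hgsum, mul_zero] at h2
      rw [h2] at h1
      rw [hδ]
      linarith
    have hmain : ∑ b ∈ Finset.univ.erase j, v b * w b = δ * (∑ i, v i * x i) := by
      have hterm : ∀ b ∈ Finset.univ.erase j,
          v b * w b = v b * (δ * x b) + v b * (-(k : ℝ) * g b) * x j := by
        intro b hb
        have hbj : b ≠ j := (Finset.mem_erase.1 hb).1
        rw [hw]
        simp only [if_neg hbj]
        ring
      rw [Finset.sum_congr rfl hterm, Finset.sum_add_distrib]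
      have h3 : ∑ b ∈ Finset.univ.erase j, v b * (δ * x b)
          = δ * ∑ b ∈ Finset.univ.erase j, v b * x b := by
        rw [Finset.mul_sum]
        exact Finset.sum_congr rfl (fun b _ => by ring)
      have h4 : ∑ b ∈ Finset.univ.erase j, v b * (-(k : ℝ) * g b) * x j
          = (∑ b ∈ Finset.univ.erase j, v b * (-(k : ℝ) * g b)) * x j := by
        rw [Finset.sum_mul]
      have h5 : (∑ b ∈ Finset.univ.erase j, v b * x b) + v j * x j = ∑ i, v i * x i :=
        Finset.sum_erase_add _ _ (Finset.mem_univ j)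
      rw [h3, h4, hYsum]
      have h6 : ∑ b ∈ Finset.univ.erase j, v b * x b = (∑ i, v i * x i) - v j * x j := by
        linarith
      rw [h6]
      ring
    refine ⟨fun i => w (e (Fin.castLE (Nat.sub_le n 1) i)), fun i => hwmem _, ?_⟩
    have hsum1 : ∑ i : Fin (n-1), v (e (Fin.castLE (Nat.sub_le n 1) i))
        * w (e (Fin.castLE (Nat.sub_le n 1) i)) = ∑ b ∈ Finset.univ.erase j, v b * w b := by
      rw [← himg, Finset.sum_image hinj2]
    simp only [smul_eq_mul]
    rw [hsum1, hmain]
  -- measure computation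
  have hscale : volume (δ • Pset) = ENNReal.ofReal |δ| * volume Pset := by
    have := MeasureTheory.Measure.addHaar_smul volume δ Pset
    simpa using this
  calc ENNReal.ofReal D * volume Pset
      ≤ ENNReal.ofReal |δ| * volume Pset := by
        apply mul_le_mul_left
        apply ENNReal.ofReal_le_ofReal
        rw [hδabs]
        exact hDk
    _ = volume (δ • Pset) := hscale.symm
    _ ≤ volume RHS := measure_mono hsub
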